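/- Let G be a simple graph with degree sequence Δ = d_1 ≥ d_2 ≥ ... ≥ d_n = δ, n ≥ 3, m edges. If d_2 = d_3 = ... = d_{n−1} (i.e., all degrees except possibly the largest and smallest are equal), then M_1(G) = 4m²/n + (1/2)(Δ − δ)² + (2n/(n−2))·(2m/n − (Δ + δ)/2)². -/
import Mathlib


open Finset

lemma split_sum (n : ℕ) (hn : 3 ≤ n) (g : Fin n → ℝ) (C : ℝ)
    (h : ∀ i : Fin n, 1 ≤ i.1 → i.1 ≤ n - 2 → g i = C) :
    ∑ i, g i = g ⟨0, by omega⟩ + g ⟨n - 1, by omega⟩ + ((n : ℝ) - 2) * C := by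
  set i0 : Fin n := ⟨0, by omega⟩
  set i1 : Fin n := ⟨n - 1, by omega⟩
  have h01 : i1 ≠ i0 := by simp [i0, i1, Fin.ext_iff]; omega
  have hmem : i1 ∈ univ.erase i0 := by simp [h01]
  have step1 : ∑ i, g i = g i0 + ∑ i ∈ univ.erase i0, g i :=
    (Finset.add_sum_erase _ _ (mem_univ i0)).symm
  have step2 : ∑ i ∈ univ.erase i0, g i = g i1 + ∑ i ∈ (univ.erase i0).erase i1, g i :=
    (Finset.add_sum_erase _ _ hmem).symm
  have hconst : ∑ i ∈ (univ.erase i0).erase i1, g i =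
      (((univ.erase i0).erase i1).card : ℝ) * C := by
    rw [Finset.sum_congr rfl (fun i hi => ?_), Finset.sum_const, nsmul_eq_mul]
    simp only [Finset.mem_erase, Finset.mem_univ, and_true] at hi
    obtain ⟨hi1, hi0⟩ := hi
    have hlt := i.2
    have h1 : 1 ≤ i.1 := by
      rcases Nat.eq_zero_or_pos i.1 with h | h
      · exact absurd (Fin.ext h) hi0
      · exact h
    have h2 : i.1 ≤ n - 2 := by
      have : i.1 ≠ n - 1 := fun hc => hi1 (Fin.ext hc)
      omega
    exact h i h1 h2
  have hcard : ((univ.erase i0).erase i1).card = n - 2 := by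
    rw [Finset.card_erase_of_mem hmem, Finset.card_erase_of_mem (mem_univ i0),
      Finset.card_univ, Fintype.card_fin]
    omega
  rw [step1, step2, hconst, hcard]
  have : ((n - 2 : ℕ) : ℝ) = (n : ℝ) - 2 := by
    have : (2 : ℕ) ≤ n := by omega
    push_cast [Nat.cast_sub this]
    ring
  rw [this]; ring

theorem stmt6 (n : ℕ) (hn : 3 ≤ n) {V : Type*} [Fintype V] [DecidableEq V]
    (G : SimpleGraph V) [DecidableRel G.Adj]
    (m : ℕ) (hm : m = G.edgeFinset.card)
    (e : Fin n ≃ V) (d : Fin n → ℕ) (hd : ∀ i, d i = G.degree (e i))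
    (hsort : Antitone d)
    (hmid : ∀ i : Fin n, 1 ≤ i.1 → i.1 ≤ n - 2 → d i = d ⟨1, by omega⟩) :
    ∑ v : V, (G.degree v : ℝ) ^ 2 =
      4 * (m : ℝ) ^ 2 / (n : ℝ)
      + (1 / 2) * ((d ⟨0, by omega⟩ : ℝ) - (d ⟨n - 1, by omega⟩ : ℝ)) ^ 2
      + (2 * (n : ℝ) / ((n : ℝ) - 2)) *
          (2 * (m : ℝ) / (n : ℝ)
            - ((d ⟨0, by omega⟩ : ℝ) + (d ⟨n - 1, by omega⟩ : ℝ)) / 2) ^ 2 := by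
  set Δ : ℝ := (d ⟨0, by omega⟩ : ℝ)
  set δ : ℝ := (d ⟨n - 1, by omega⟩ : ℝ)
  set c : ℝ := (d ⟨1, by omega⟩ : ℝ)
  -- convert sums over V to sums over Fin n
  have hsq : ∑ v : V, (G.degree v : ℝ) ^ 2 = ∑ i : Fin n, (d i : ℝ) ^ 2 := by
    rw [← Equiv.sum_comp e (fun v => (G.degree v : ℝ) ^ 2)]
    exact Finset.sum_congr rfl (fun i _ => by rw [hd i])
  have hdeg : ∑ v : V, (G.degree v : ℝ) = ∑ i : Fin n, (d i : ℝ) := by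
    rw [← Equiv.sum_comp e (fun v => (G.degree v : ℝ))]
    exact Finset.sum_congr rfl (fun i _ => by rw [hd i])
  have hsplit1 : ∑ i : Fin n, (d i : ℝ) = Δ + δ + ((n : ℝ) - 2) * c :=
    split_sum n hn _ c (fun i h1 h2 => by rw [hmid i h1 h2])
  have hsplit2 : ∑ i : Fin n, (d i : ℝ) ^ 2 = Δ ^ 2 + δ ^ 2 + ((n : ℝ) - 2) * c ^ 2 :=
    split_sum n hn _ (c ^ 2) (fun i h1 h2 => by rw [hmid i h1 h2])
  have hsum : (2 : ℝ) * m = Δ + δ + ((n : ℝ) - 2) * c := by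
    have key : ∑ v : V, G.degree v = 2 * m := by
      rw [hm]; exact G.sum_degrees_eq_twice_card_edges
    rw [← hsplit1, ← hdeg]
    exact_mod_cast congrArg (Nat.cast : ℕ → ℝ) key.symm
  have hmval : (m : ℝ) = (Δ + δ + ((n : ℝ) - 2) * c) / 2 := by linarith
  have hn0 : (n : ℝ) ≠ 0 := by positivity
  have hn2 : (n : ℝ) - 2 ≠ 0 := by
    have : (3 : ℝ) ≤ n := by exact_mod_cast hn
    linarith
  rw [hsq, hsplit2, hmval]
  field_simp
  ring
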